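/- Let K, g : ℝ → ℝ be continuous on [1,∞) and suppose there exist constants c > 0 and C > 0 such that 1 − C·e^{−cτ} ≤ K(τ) ≤ 1 and 0 ≤ g(s) ≤ C·s·e^{−cs} for all τ, s ≥ 1. Then there exists a finite real number L ≥ 0 such that m(t) := (1/2)∫₁ᵗ (1 − K(τ)·exp(−∫_τ^t g(s) ds)) dτ converges to L as t → ∞. -/

import Mathlib

open MeasureTheory intervalIntegral Real Filter

/- auxiliary lemmas -/
lemma aux_int_exp_neg {k : ℝ} (hk : 0 < k) (a b : ℝ) :
    ∫ x in a..b, Real.exp (-(k*x)) = (Real.exp (-(k*a)) - Real.exp (-(k*b)))/k := by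
  have h : ∀ x ∈ Set.uIcc a b, HasDerivAt (fun y => -Real.exp (-(k*y))/k) (Real.exp (-(k*x))) x := by
    intro x _
    have h1 : HasDerivAt (fun y : ℝ => -(k*y)) (-k) x := by
      simpa using ((hasDerivAt_id x).const_mul k).fun_neg
    have h2 := (Real.hasDerivAt_exp (-(k*x))).comp x h1
    have h3 := h2.neg.div_const k
    convert h3 using 1
    · rfl
    · rfl
    · rfl
    field_simp
  rw [intervalIntegral.integral_eq_sub_of_hasDerivAt h (by apply Continuous.intervalIntegrable; continuity)]
  field_simp
  ring

-- x ≤ (2/k) exp(k x /2) for x ≥ 0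
lemma aux_lin_le_exp {k x : ℝ} (hk : 0 < k) (hx : 0 ≤ x) :
    x ≤ (2/k) * Real.exp (k*x/2) := by
  have h := Real.add_one_le_exp (k*x/2)
  have h2 : (0:ℝ) ≤ k*x/2 := by positivity
  rw [← sub_nonneg]
  have : (2/k) * Real.exp (k*x/2) - x = (2/k) * ((Real.exp (k*x/2)) - k*x/2) := by
    field_simp
  rw [this]
  have h3 : k*x/2 ≤ Real.exp (k*x/2) := by linarith
  have h4 : (0:ℝ) ≤ 2/k := by positivity
  nlinarith


set_option maxHeartbeats 4000000 in
/-- under exponential decay hypotheses, the asphericity mass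
`m(t)` converges to a finite nonnegative limit as `t → ∞`. -/
theorem asphericity_mass_converges
    (K g : ℝ → ℝ)
    (hKcont : ContinuousOn K (Set.Ici 1))
    (hgcont : ContinuousOn g (Set.Ici 1))
    (c C : ℝ) (hc : 0 < c) (hC : 0 < C)
    (hKlow : ∀ τ : ℝ, 1 ≤ τ → 1 - C * Real.exp (-c * τ) ≤ K τ)
    (hKup : ∀ τ : ℝ, 1 ≤ τ → K τ ≤ 1)
    (hg0 : ∀ s : ℝ, 1 ≤ s → 0 ≤ g s)
    (hgup : ∀ s : ℝ, 1 ≤ s → g s ≤ C * s * Real.exp (-c * s)) :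
    ∃ L : ℝ, 0 ≤ L ∧
      Tendsto (fun t : ℝ =>
        (1 / 2) * ∫ τ in (1:ℝ)..t,
          (1 - K τ * Real.exp (-∫ s in τ..t, g s))) atTop (nhds L) := by
  set c' : ℝ := c/2 with hc'def
  have hc' : 0 < c' := by positivity
  set B : ℝ := C * (1 + 2/c) with hBdef
  have hB : 0 < B := by positivity
  set D : ℝ := B / c' with hDdef
  have hD : 0 < D := by positivity
  -- uniform exponential bounds with rate c'
  have hexple : ∀ τ : ℝ, 0 ≤ τ → Real.exp (-(c*τ)) ≤ Real.exp (-(c'*τ)) := by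
    intro τ hτ
    apply Real.exp_le_exp.2
    rw [hc'def]; nlinarith
  have hK1 : ∀ τ : ℝ, 1 ≤ τ → 1 - B * Real.exp (-(c'*τ)) ≤ K τ := by
    intro τ hτ
    have h1 := hKlow τ hτ
    have h2 := hexple τ (by linarith)
    have h3 : C ≤ B := by rw [hBdef]; nlinarith [div_pos (by norm_num : (0:ℝ) < 2) hc]
    have h4 : C * Real.exp (-c * τ) ≤ B * Real.exp (-(c'*τ)) := by
      rw [neg_mul]
      nlinarith [Real.exp_pos (-(c*τ)), Real.exp_pos (-(c'*τ))]
    linarith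
  have hg1 : ∀ s : ℝ, 1 ≤ s → g s ≤ B * Real.exp (-(c'*s)) := by
    intro s hs
    have h1 := hgup s hs
    have h2 : s ≤ (2/c) * Real.exp (c*s/2) := aux_lin_le_exp hc (by linarith)
    have h3 : Real.exp (-c*s) * Real.exp (c*s/2) = Real.exp (-(c'*s)) := by
      rw [← Real.exp_add]; congr 1; rw [hc'def]; ring
    have h4 : C * s * Real.exp (-c*s) ≤ C * (2/c) * Real.exp (-(c'*s)) := by
      rw [← h3]
      have hp := Real.exp_pos (-c*s)
      nlinarith [mul_le_mul_of_nonneg_right h2 hp.le, hC.le]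
    have h5 : C * (2/c) ≤ B := by rw [hBdef]; nlinarith
    nlinarith [Real.exp_pos (-(c'*s))]
  -- the primitive of g
  set G : ℝ → ℝ := fun x => ∫ s in (1:ℝ)..x, g s with hGdef
  have hgInt : ∀ a b : ℝ, 1 ≤ a → 1 ≤ b → IntervalIntegrable g volume a b := by
    intro a b ha hb
    apply ContinuousOn.intervalIntegrable
    apply hgcont.mono
    intro x hx
    exact le_trans (le_min ha hb) hx.1
  have hGadd : ∀ τ t : ℝ, 1 ≤ τ → 1 ≤ t → (∫ s in τ..t, g s) = G t - G τ := by
    intro τ t hτ ht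
    have := intervalIntegral.integral_add_adjacent_intervals (hgInt 1 τ le_rfl hτ) (hgInt τ t hτ ht)
    simp only [hGdef]
    linarith
  have hGmono : ∀ a b : ℝ, 1 ≤ a → a ≤ b → G a ≤ G b := by
    intro a b ha hab
    have h0 : (0:ℝ) ≤ ∫ s in a..b, g s := by
      apply intervalIntegral.integral_nonneg hab
      intro u hu
      exact hg0 u (le_trans ha hu.1)
    have := hGadd a b ha (le_trans ha hab)
    linarith
  have hGbound : ∀ a b : ℝ, 1 ≤ a → a ≤ b → G b - G a ≤ D * Real.exp (-(c'*a)) := by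
    intro a b ha hab
    have hb : (1:ℝ) ≤ b := le_trans ha hab
    rw [← hGadd a b ha hb]
    have h1 : (∫ s in a..b, g s) ≤ ∫ s in a..b, B * Real.exp (-(c'*s)) := by
      apply intervalIntegral.integral_mono_on hab (hgInt a b ha hb)
      · exact (continuous_const.mul ((Real.continuous_exp).comp
          ((continuous_const.mul continuous_id).neg))).intervalIntegrable _ _
      · intro u hu; exact hg1 u (le_trans ha hu.1)
    have h2 : (∫ s in a..b, B * Real.exp (-(c'*s)))
        = B * ((Real.exp (-(c'*a)) - Real.exp (-(c'*b)))/c') := by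
      rw [intervalIntegral.integral_const_mul, aux_int_exp_neg hc']
    have h3 : Real.exp (-(c'*b)) ≤ Real.exp (-(c'*a)) := by
      apply Real.exp_le_exp.2; nlinarith
    have hexpb := Real.exp_pos (-(c'*b))
    rw [h2] at h1
    have h4 : B * ((Real.exp (-(c'*a)) - Real.exp (-(c'*b)))/c')
        ≤ D * Real.exp (-(c'*a)) := by
      rw [hDdef, mul_div_assoc', div_le_iff₀ hc']
      have he : B / c' * Real.exp (-(c'*a)) * c' = B * Real.exp (-(c'*a)) := by
        field_simp
      rw [he]
      nlinarith
    linarith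
  have hGcontOn : ∀ b : ℝ, 1 ≤ b → ContinuousOn G (Set.Icc 1 b) := by
    intro b hb
    have := intervalIntegral.continuousOn_primitive_interval'
      (μ := volume) (hgInt 1 b le_rfl hb) Set.left_mem_uIcc
    rwa [Set.uIcc_of_le hb] at this
  set f : ℝ → ℝ → ℝ := fun t τ => 1 - K τ * Real.exp (G τ - G t) with hfdef
  have hfInt : ∀ t a b : ℝ, 1 ≤ t → 1 ≤ a → a ≤ b → b ≤ t →
      IntervalIntegrable (f t) volume a b := by
    intro t a b ht ha hab hbt
    apply ContinuousOn.intervalIntegrable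
    have hsub : Set.uIcc a b ⊆ Set.Icc 1 t := by
      rw [Set.uIcc_of_le hab]
      exact Set.Icc_subset_Icc ha hbt
    apply ContinuousOn.sub continuousOn_const
    apply ContinuousOn.mul
    · exact hKcont.mono fun x hx => (hsub hx).1
    · exact (Real.continuous_exp.comp_continuousOn
        (((hGcontOn t ht).mono hsub).sub continuousOn_const))
  -- basic bounds on E := exp (G τ - G t)
  have hEle1 : ∀ t τ : ℝ, 1 ≤ τ → τ ≤ t → Real.exp (G τ - G t) ≤ 1 := by
    intro t τ hτ hτt
    rw [← Real.exp_zero]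
    exact Real.exp_le_exp.2 (by linarith [hGmono τ t hτ hτt])
  have hf_nonneg : ∀ t τ : ℝ, 1 ≤ τ → τ ≤ t → 0 ≤ f t τ := by
    intro t τ hτ hτt
    have h1 := hEle1 t τ hτ hτt
    have h2 := Real.exp_pos (G τ - G t)
    have h3 := hKup τ hτ
    simp only [hfdef, sub_nonneg]
    nlinarith
  have hf_up : ∀ t τ : ℝ, 1 ≤ τ → τ ≤ t → f t τ ≤ (D + B) * Real.exp (-(c'*τ)) := by
    intro t τ hτ hτt
    have ht : (1:ℝ) ≤ t := le_trans hτ hτt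
    have h1 := hEle1 t τ hτ hτt
    have h2 := Real.exp_pos (G τ - G t)
    have h3 := hK1 τ hτ
    have h4 : 1 - Real.exp (G τ - G t) ≤ G t - G τ := by
      have := Real.add_one_le_exp (G τ - G t)
      linarith
    have h5 := hGbound τ t hτ hτt
    have h6 := Real.exp_pos (-(c'*τ))
    have h7 : 1 - K τ ≤ B * Real.exp (-(c'*τ)) := by linarith
    have h70 : 0 ≤ 1 - K τ := by linarith [hKup τ hτ]
    have h8 : Real.exp (G τ - G t) * (1 - K τ) ≤ 1 * (B * Real.exp (-(c'*τ))) :=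
      mul_le_mul h1 h7 h70 (by norm_num)
    simp only [hfdef]
    nlinarith
  set M : ℝ := (1+B)*D*(2/c') + (D+B)/c' with hMdef
  have hM : 0 < M := by positivity
  have key : ∀ t₁ t₂ : ℝ, 1 ≤ t₁ → t₁ ≤ t₂ →
      |(∫ τ in (1:ℝ)..t₂, f t₂ τ) - ∫ τ in (1:ℝ)..t₁, f t₁ τ|
        ≤ M * Real.exp (-(c'/2*t₁)) := by
    intro t₁ t₂ ht₁ ht₁₂
    have ht₂ : (1:ℝ) ≤ t₂ := le_trans ht₁ ht₁₂
    have hI1 : IntervalIntegrable (f t₂) volume 1 t₁ := hfInt t₂ 1 t₁ ht₂ le_rfl ht₁ ht₁₂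
    have hI2 : IntervalIntegrable (f t₂) volume t₁ t₂ := hfInt t₂ t₁ t₂ ht₂ ht₁ ht₁₂ le_rfl
    have hI3 : IntervalIntegrable (f t₁) volume 1 t₁ := hfInt t₁ 1 t₁ ht₁ le_rfl ht₁ le_rfl
    have hsplit : (∫ τ in (1:ℝ)..t₂, f t₂ τ)
        = (∫ τ in (1:ℝ)..t₁, f t₂ τ) + ∫ τ in t₁..t₂, f t₂ τ :=
      (intervalIntegral.integral_add_adjacent_intervals hI1 hI2).symm
    have hsub : (∫ τ in (1:ℝ)..t₁, f t₂ τ) - (∫ τ in (1:ℝ)..t₁, f t₁ τ)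
        = ∫ τ in (1:ℝ)..t₁, (f t₂ τ - f t₁ τ) :=
      (intervalIntegral.integral_sub hI1 hI3).symm
    -- bound on the difference term
    have hptA : ∀ τ ∈ Set.Icc (1:ℝ) t₁, |f t₂ τ - f t₁ τ|
        ≤ (1+B) * (D * Real.exp (-(c'*t₁))) := by
      intro τ hτ
      have hτ1 : (1:ℝ) ≤ τ := hτ.1
      have hτt₁ : τ ≤ t₁ := hτ.2
      have hdiff : f t₂ τ - f t₁ τ
          = K τ * (Real.exp (G τ - G t₁) - Real.exp (G τ - G t₂)) := by
        simp only [hfdef]; ring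
      have hE1 := hEle1 t₁ τ hτ1 hτt₁
      have hE1pos := Real.exp_pos (G τ - G t₁)
      have hexpand : Real.exp (G τ - G t₂)
          = Real.exp (G τ - G t₁) * Real.exp (G t₁ - G t₂) := by
        rw [← Real.exp_add]; ring_nf
      have hmle : 1 - Real.exp (G t₁ - G t₂) ≤ G t₂ - G t₁ := by
        have := Real.add_one_le_exp (G t₁ - G t₂); linarith
      have hmge : Real.exp (G t₁ - G t₂) ≤ 1 := by
        rw [Real.exp_le_one_iff]; linarith [hGmono t₁ t₂ ht₁ ht₁₂]
      have h1q : 0 ≤ 1 - Real.exp (G t₁ - G t₂) := by linarith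
      have hEub : Real.exp (G τ - G t₁) - Real.exp (G τ - G t₂) ≤ G t₂ - G t₁ := by
        rw [hexpand]
        calc Real.exp (G τ - G t₁) - Real.exp (G τ - G t₁) * Real.exp (G t₁ - G t₂)
            = Real.exp (G τ - G t₁) * (1 - Real.exp (G t₁ - G t₂)) := by ring
          _ ≤ 1 * (1 - Real.exp (G t₁ - G t₂)) := by
              exact mul_le_mul_of_nonneg_right hE1 h1q
          _ ≤ G t₂ - G t₁ := by linarith
      have hEnn : 0 ≤ Real.exp (G τ - G t₁) - Real.exp (G τ - G t₂) := by
        rw [hexpand]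
        have := mul_nonneg hE1pos.le h1q
        nlinarith
      have hGb := hGbound t₁ t₂ ht₁ ht₁₂
      have hKabs : |K τ| ≤ 1 + B := by
        have h1 := hK1 τ hτ1
        have h2 := hKup τ hτ1
        have h3 : Real.exp (-(c'*τ)) ≤ 1 := by
          rw [Real.exp_le_one_iff]; nlinarith
        have h4 := Real.exp_pos (-(c'*τ))
        rw [abs_le]; constructor <;> nlinarith
      rw [hdiff, abs_mul]
      have h5 : |Real.exp (G τ - G t₁) - Real.exp (G τ - G t₂)|
          ≤ D * Real.exp (-(c'*t₁)) := by
        rw [abs_of_nonneg hEnn]; linarith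
      exact mul_le_mul hKabs h5 (abs_nonneg _) (by positivity)
    have hA : |∫ τ in (1:ℝ)..t₁, (f t₂ τ - f t₁ τ)|
        ≤ (t₁ - 1) * ((1+B) * (D * Real.exp (-(c'*t₁)))) := by
      calc |∫ τ in (1:ℝ)..t₁, (f t₂ τ - f t₁ τ)|
          ≤ ∫ τ in (1:ℝ)..t₁, |f t₂ τ - f t₁ τ| := by
            exact intervalIntegral.abs_integral_le_integral_abs ht₁
        _ ≤ ∫ _τ in (1:ℝ)..t₁, (1+B) * (D * Real.exp (-(c'*t₁))) := by
            apply intervalIntegral.integral_mono_on ht₁ (hI1.sub hI3).abs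
              intervalIntegrable_const hptA
        _ = (t₁ - 1) * ((1+B) * (D * Real.exp (-(c'*t₁)))) := by
            rw [intervalIntegral.integral_const, smul_eq_mul]
    have hBterm : |∫ τ in t₁..t₂, f t₂ τ| ≤ ((D+B)/c') * Real.exp (-(c'*t₁)) := by
      calc |∫ τ in t₁..t₂, f t₂ τ|
          ≤ ∫ τ in t₁..t₂, |f t₂ τ| := by
            exact intervalIntegral.abs_integral_le_integral_abs ht₁₂
        _ ≤ ∫ τ in t₁..t₂, (D+B) * Real.exp (-(c'*τ)) := by
            apply intervalIntegral.integral_mono_on ht₁₂ hI2.abs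
            · exact (continuous_const.mul ((Real.continuous_exp).comp
                ((continuous_const.mul continuous_id).neg))).intervalIntegrable _ _
            · intro τ hτ
              have hτ1 : (1:ℝ) ≤ τ := le_trans ht₁ hτ.1
              rw [abs_of_nonneg (hf_nonneg t₂ τ hτ1 hτ.2)]
              exact hf_up t₂ τ hτ1 hτ.2
        _ = (D+B) * ((Real.exp (-(c'*t₁)) - Real.exp (-(c'*t₂)))/c') := by
            rw [intervalIntegral.integral_const_mul, aux_int_exp_neg hc']
        _ ≤ ((D+B)/c') * Real.exp (-(c'*t₁)) := by
            have hle : Real.exp (-(c'*t₁)) - Real.exp (-(c'*t₂)) ≤ Real.exp (-(c'*t₁)) := by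
              linarith [Real.exp_pos (-(c'*t₂))]
            have h9 : (D+B) * ((Real.exp (-(c'*t₁)) - Real.exp (-(c'*t₂)))/c')
                ≤ (D+B) * (Real.exp (-(c'*t₁))/c') :=
              mul_le_mul_of_nonneg_left ((div_le_div_iff_of_pos_right hc').2 hle) (by positivity)
            have h10 : (D+B) * (Real.exp (-(c'*t₁))/c')
                = ((D+B)/c') * Real.exp (-(c'*t₁)) := by ring
            linarith
    -- assemble
    have hgrow : (t₁ - 1) * Real.exp (-(c'*t₁)) ≤ (2/c') * Real.exp (-(c'/2*t₁)) := by
      have h1 : t₁ ≤ (2/c') * Real.exp (c'*t₁/2) := aux_lin_le_exp hc' (by linarith)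
      have h2 : Real.exp (c'*t₁/2) * Real.exp (-(c'*t₁)) = Real.exp (-(c'/2*t₁)) := by
        rw [← Real.exp_add]; congr 1; ring
      have h3 := Real.exp_pos (-(c'*t₁))
      have h4 : (t₁ - 1) * Real.exp (-(c'*t₁)) ≤ t₁ * Real.exp (-(c'*t₁)) := by nlinarith
      have h5 : t₁ * Real.exp (-(c'*t₁)) ≤ (2/c') * (Real.exp (c'*t₁/2) * Real.exp (-(c'*t₁))) := by
        nlinarith [mul_le_mul_of_nonneg_right h1 h3.le]
      rw [h2] at h5
      linarith
    have hmono2 : Real.exp (-(c'*t₁)) ≤ Real.exp (-(c'/2*t₁)) := by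
      apply Real.exp_le_exp.2; nlinarith
    have htotal : |(∫ τ in (1:ℝ)..t₂, f t₂ τ) - ∫ τ in (1:ℝ)..t₁, f t₁ τ|
        ≤ |∫ τ in (1:ℝ)..t₁, (f t₂ τ - f t₁ τ)| + |∫ τ in t₁..t₂, f t₂ τ| := by
      rw [hsplit]
      have : (∫ τ in (1:ℝ)..t₁, f t₂ τ) + (∫ τ in t₁..t₂, f t₂ τ) - ∫ τ in (1:ℝ)..t₁, f t₁ τ
          = (∫ τ in (1:ℝ)..t₁, (f t₂ τ - f t₁ τ)) + ∫ τ in t₁..t₂, f t₂ τ := by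
        rw [← hsub]; ring
      rw [this]
      exact abs_add_le _ _
    have hAfinal : |∫ τ in (1:ℝ)..t₁, (f t₂ τ - f t₁ τ)|
        ≤ (1+B)*D*(2/c') * Real.exp (-(c'/2*t₁)) := by
      refine hA.trans ?_
      have h6 : (0:ℝ) ≤ (1+B)*D := by positivity
      calc (t₁ - 1) * ((1+B) * (D * Real.exp (-(c'*t₁))))
          = (1+B)*D * ((t₁-1) * Real.exp (-(c'*t₁))) := by ring
        _ ≤ (1+B)*D * ((2/c') * Real.exp (-(c'/2*t₁))) := by
            exact mul_le_mul_of_nonneg_left hgrow h6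
        _ = (1+B)*D*(2/c') * Real.exp (-(c'/2*t₁)) := by ring
    have hBfinal : |∫ τ in t₁..t₂, f t₂ τ| ≤ (D+B)/c' * Real.exp (-(c'/2*t₁)) := by
      refine hBterm.trans ?_
      exact mul_le_mul_of_nonneg_left hmono2 (by positivity)
    calc |(∫ τ in (1:ℝ)..t₂, f t₂ τ) - ∫ τ in (1:ℝ)..t₁, f t₁ τ|
        ≤ |∫ τ in (1:ℝ)..t₁, (f t₂ τ - f t₁ τ)| + |∫ τ in t₁..t₂, f t₂ τ| := htotal
      _ ≤ (1+B)*D*(2/c') * Real.exp (-(c'/2*t₁)) + (D+B)/c' * Real.exp (-(c'/2*t₁)) := by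
          exact add_le_add hAfinal hBfinal
      _ = M * Real.exp (-(c'/2*t₁)) := by rw [hMdef]; ring
  set m' : ℝ → ℝ := fun t => (1/2) * ∫ τ in (1:ℝ)..t, f t τ with hm'def
  have hdistle : ∀ t₁ t₂ : ℝ, 1 ≤ t₁ → t₁ ≤ t₂ →
      dist (m' t₁) (m' t₂) ≤ M * Real.exp (-(c'/2*t₁)) := by
    intro t₁ t₂ ht₁ ht₁₂
    rw [Real.dist_eq]
    have := key t₁ t₂ ht₁ ht₁₂
    have habs : |m' t₁ - m' t₂|
        = (1/2) * |(∫ τ in (1:ℝ)..t₂, f t₂ τ) - ∫ τ in (1:ℝ)..t₁, f t₁ τ| := by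
      simp only [hm'def]
      rw [← mul_sub, abs_mul, abs_of_pos (show (0:ℝ) < 1/2 by norm_num), abs_sub_comm]
    rw [habs]
    linarith [abs_nonneg ((∫ τ in (1:ℝ)..t₂, f t₂ τ) - ∫ τ in (1:ℝ)..t₁, f t₁ τ)]
  have h0 : Tendsto (fun t : ℝ => M * Real.exp (-(c'/2*t))) atTop (nhds 0) := by
    have h1 : Tendsto (fun t : ℝ => c'/2*t) atTop atTop := by
      apply Tendsto.const_mul_atTop (by positivity) tendsto_id
    have h2 : Tendsto (fun t : ℝ => Real.exp (-(c'/2*t))) atTop (nhds 0) := by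
      exact Real.tendsto_exp_neg_atTop_nhds_zero.comp h1
    simpa using h2.const_mul M
  have hexpmono : ∀ a b : ℝ, a ≤ b →
      Real.exp (-(c'/2*b)) ≤ Real.exp (-(c'/2*a)) := by
    intro a b hab; apply Real.exp_le_exp.2; nlinarith
  have hcauchy : Cauchy (Filter.map m' atTop) := by
    rw [Metric.cauchy_iff]
    refine ⟨Filter.map_neBot, ?_⟩
    intro ε hε
    obtain ⟨T, hT1, hTε⟩ : ∃ T : ℝ, 1 ≤ T ∧ M * Real.exp (-(c'/2*T)) < ε := by
      have := (h0.eventually (gt_mem_nhds hε)).and (eventually_ge_atTop (1:ℝ))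
      obtain ⟨T, h1, h2⟩ := this.exists
      exact ⟨T, h2, h1⟩
    refine ⟨m' '' Set.Ici T, ?_, ?_⟩
    · rw [mem_map]
      exact mem_of_superset (Ici_mem_atTop T) (fun x hx => Set.mem_image_of_mem _ hx)
    · rintro x ⟨t₁, ht₁, rfl⟩ y ⟨t₂, ht₂, rfl⟩
      rcases le_total t₁ t₂ with h | h
      · calc dist (m' t₁) (m' t₂) ≤ M * Real.exp (-(c'/2*t₁)) :=
              hdistle t₁ t₂ (le_trans hT1 ht₁) h
          _ ≤ M * Real.exp (-(c'/2*T)) := by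
              exact mul_le_mul_of_nonneg_left (hexpmono T t₁ ht₁) hM.le
          _ < ε := hTε
      · rw [dist_comm]
        calc dist (m' t₂) (m' t₁) ≤ M * Real.exp (-(c'/2*t₂)) :=
              hdistle t₂ t₁ (le_trans hT1 ht₂) h
          _ ≤ M * Real.exp (-(c'/2*T)) := by
              exact mul_le_mul_of_nonneg_left (hexpmono T t₂ ht₂) hM.le
          _ < ε := hTε
  obtain ⟨L, hL⟩ := cauchy_map_iff_exists_tendsto.1 hcauchy
  have hm'nonneg : ∀ᶠ t in atTop, 0 ≤ m' t := by
    filter_upwards [eventually_ge_atTop (1:ℝ)] with t ht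
    rw [hm'def]
    have : (0:ℝ) ≤ ∫ τ in (1:ℝ)..t, f t τ := by
      apply intervalIntegral.integral_nonneg ht
      intro τ hτ
      exact hf_nonneg t τ hτ.1 hτ.2
    positivity
  have hLnn : 0 ≤ L := ge_of_tendsto hL hm'nonneg
  have heq : ∀ t : ℝ, 1 ≤ t →
      (1 / 2 : ℝ) * (∫ τ in (1:ℝ)..t, (1 - K τ * Real.exp (-∫ s in τ..t, g s))) = m' t := by
    intro t ht
    rw [hm'def]
    congr 1
    apply intervalIntegral.integral_congr
    intro τ hτ
    rw [Set.uIcc_of_le ht] at hτ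
    simp only [hfdef]
    rw [hGadd τ t hτ.1 ht, neg_sub]
  refine ⟨L, hLnn, ?_⟩
  apply hL.congr'
  filter_upwards [eventually_ge_atTop (1:ℝ)] with t ht
  exact (heq t ht).symm
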